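/- Assume {ξ_k}_{k=1}^m strictly interlaces {ζ_j}_{j=1}^n on 𝕊¹, and let J ∈ 𝔍₊, written J = {j_1,…,j_m} with j_r ∈ I_r for each r. Then for every r = 1,…,m one has sign( ∏_{k=1}^m sin((θ_{j_r} − φ_k)/2) ) = (−1)^{m−r} and sign( ∏_{s ≠ r} sin((θ_{j_r} − θ_{j_s})/2) ) = (−1)^{m−r}; consequently ω^{(J)}_{j_r} > 0 for every r, so the circuit vector ω^{(J)} has all entries ≥ 0 and is strictly positive on J. -/
import Mathlib


/-- The real circuit vector `ω^{(J)} ∈ ℝⁿ` on the circle. -/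
noncomputable def circuitC (n m : ℕ) (θ φ : ℕ → ℝ) (J : Finset (Fin n)) : Fin n → ℝ :=
  fun j => if j ∈ J then
    1 / ((∏ k ∈ Finset.Icc 1 m, Real.sin ((θ ((j : ℕ) + 1) - φ k) / 2)) *
      ∏ j' ∈ J.erase j, Real.sin ((θ ((j : ℕ) + 1) - θ ((j' : ℕ) + 1)) / 2))
  else 0

/-- The band `I_r = {j : φ_r < θ_j < φ_{r+1}}`, realised inside `Fin n`
(coordinate `j : Fin n` is the 1-based index `j+1`). -/
noncomputable def bandC (n : ℕ) (θ φ : ℕ → ℝ) (r : ℕ) : Finset (Fin n) :=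
  Finset.univ.filter (fun j => φ r < θ ((j : ℕ) + 1) ∧ θ ((j : ℕ) + 1) < φ (r + 1))

private lemma sinHalfPos {x : ℝ} (h0 : 0 < x) (h2 : x < 2 * Real.pi) :
    0 < Real.sin (x / 2) :=
  Real.sin_pos_of_pos_of_lt_pi (by linarith) (by linarith)

private lemma sinHalfNeg {x : ℝ} (h0 : x < 0) (h2 : -(2 * Real.pi) < x) :
    Real.sin (x / 2) < 0 := by
  have h := sinHalfPos (x := -x) (by linarith) (by linarith)
  rw [neg_div, Real.sin_neg] at h
  linarith

private lemma prodNegPow {α : Type*} (s : Finset α) (f : α → ℝ)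
    (h : ∀ a ∈ s, f a < 0) : 0 < (-1 : ℝ) ^ s.card * ∏ a ∈ s, f a := by
  have h1 : 0 < ∏ a ∈ s, (-f a) :=
    Finset.prod_pos (fun a ha => by linarith [h a ha])
  have h2 : ∏ a ∈ s, (-f a) = (-1 : ℝ) ^ s.card * ∏ a ∈ s, f a := by
    have hc : ∀ a ∈ s, -f a = (-1 : ℝ) * f a := fun a _ => by ring
    rw [Finset.prod_congr rfl hc, Finset.prod_mul_distrib, Finset.prod_const]
  linarith [h2 ▸ h1]

private lemma prodSplitPow {α : Type*} (s : Finset α) (f : α → ℝ) (p : α → Prop)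
    [DecidablePred p] (hpos : ∀ a ∈ s, p a → 0 < f a)
    (hneg : ∀ a ∈ s, ¬ p a → f a < 0) :
    0 < (-1 : ℝ) ^ (s.filter (fun a => ¬ p a)).card * ∏ a ∈ s, f a := by
  rw [← Finset.prod_filter_mul_prod_filter_not s p]
  have hA : 0 < ∏ a ∈ s.filter p, f a :=
    Finset.prod_pos (fun a ha =>
      hpos a (Finset.mem_filter.1 ha).1 (Finset.mem_filter.1 ha).2)
  have hB := prodNegPow (s.filter (fun a => ¬ p a)) f
    (fun a ha => hneg a (Finset.mem_filter.1 ha).1 (Finset.mem_filter.1 ha).2)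
  calc (0:ℝ) < (∏ a ∈ s.filter p, f a) *
        ((-1:ℝ) ^ (s.filter (fun a => ¬ p a)).card *
          ∏ a ∈ s.filter (fun a => ¬ p a), f a) := mul_pos hA hB
    _ = _ := by ring

private lemma signPow {x : ℝ} {k : ℕ} (h : 0 < (-1 : ℝ) ^ k * x) :
    Real.sign x = (-1 : ℝ) ^ k := by
  rcases Nat.even_or_odd k with hk | hk
  · rw [hk.neg_one_pow] at h ⊢
    rw [one_mul] at h
    exact Real.sign_of_pos h
  · rw [hk.neg_one_pow] at h ⊢
    rw [neg_one_mul] at h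
    exact Real.sign_of_neg (by linarith)

theorem stmt_15 (m n : ℕ) (hm : 1 ≤ m) (hmn : m < n)
    (θ φ : ℕ → ℝ)
    (hφ : ∀ k, 1 ≤ k → k ≤ m → φ k < φ (k + 1))
    (hφp : φ (m + 1) = φ 1 + 2 * Real.pi)
    (hθ1 : φ 1 < θ 1)
    (hθ : ∀ j, 1 ≤ j → j < n → θ j < θ (j + 1))
    (hθn : θ n < φ 1 + 2 * Real.pi)
    (hθφ : ∀ j k, 1 ≤ j → j ≤ n → 1 ≤ k → k ≤ m → θ j ≠ φ k)
    (hbands : ∀ r, 1 ≤ r → r ≤ m → (bandC n θ φ r).Nonempty)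
    (J : Finset (Fin n)) (hJcard : J.card = m)
    (hJplus : ∀ r, 1 ≤ r → r ≤ m → (J ∩ bandC n θ φ r).card = 1)
    (e : ℕ → Fin n)
    (he : ∀ r, 1 ≤ r → r ≤ m → e r ∈ bandC n θ φ r)
    (hJe : J = Finset.image e (Finset.Icc 1 m)) :
    (∀ r, 1 ≤ r → r ≤ m →
      Real.sign (∏ k ∈ Finset.Icc 1 m,
          Real.sin ((θ ((e r : ℕ) + 1) - φ k) / 2)) = (-1 : ℝ) ^ (m - r) ∧
      Real.sign (∏ s ∈ (Finset.Icc 1 m).erase r,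
          Real.sin ((θ ((e r : ℕ) + 1) - θ ((e s : ℕ) + 1)) / 2)) = (-1 : ℝ) ^ (m - r) ∧
      0 < circuitC n m θ φ J (e r)) ∧
    (∀ j : Fin n, 0 ≤ circuitC n m θ φ J j) ∧
    (∀ j ∈ J, 0 < circuitC n m θ φ J j) := by
  -- φ is monotone on [1, m+1]
  have hφle : ∀ b a : ℕ, 1 ≤ a → a ≤ b → b ≤ m + 1 → φ a ≤ φ b := by
    intro b
    induction b with
    | zero => intro a ha hab _; omega
    | succ c ih =>
      intro a ha hab hb
      rcases Nat.eq_or_lt_of_le hab with h | h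
      · rw [h]
      · have h1 : φ a ≤ φ c := ih a ha (by omega) (by omega)
        have h2 : φ c < φ (c + 1) := hφ c (by omega) (by omega)
        linarith
  -- band bounds for e r
  have hband : ∀ r, 1 ≤ r → r ≤ m →
      φ r < θ ((e r : ℕ) + 1) ∧ θ ((e r : ℕ) + 1) < φ (r + 1) := by
    intro r h1 h2
    have h := he r h1 h2
    simpa [bandC] using h
  -- θ (e r) lies in (φ 1, φ 1 + 2π)
  have hrange : ∀ r, 1 ≤ r → r ≤ m →
      φ 1 < θ ((e r : ℕ) + 1) ∧ θ ((e r : ℕ) + 1) < φ 1 + 2 * Real.pi := by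
    intro r h1 h2
    obtain ⟨hl, hr⟩ := hband r h1 h2
    constructor
    · have := hφle r 1 le_rfl h1 (by omega); linarith
    · have := hφle (m + 1) (r + 1) (by omega) (by omega) le_rfl
      rw [hφp] at this; linarith
  -- ordering of the θ (e r)
  have hord : ∀ s r, 1 ≤ s → s < r → r ≤ m →
      θ ((e s : ℕ) + 1) < θ ((e r : ℕ) + 1) := by
    intro s r h1 h2 h3
    have hs := hband s h1 (by omega)
    have hr := hband r (by omega) h3
    have := hφle r (s + 1) (by omega) (by omega) (by omega)
    linarith [hs.2, hr.1]
  -- the first product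
  have hP1 : ∀ r, 1 ≤ r → r ≤ m →
      0 < (-1 : ℝ) ^ (m - r) *
        ∏ k ∈ Finset.Icc 1 m, Real.sin ((θ ((e r : ℕ) + 1) - φ k) / 2) := by
    intro r h1 h2
    have hfilter : ((Finset.Icc 1 m).filter (fun k => ¬ k ≤ r)).card = m - r := by
      have heq : (Finset.Icc 1 m).filter (fun k => ¬ k ≤ r) = Finset.Icc (r + 1) m := by
        ext x; simp only [Finset.mem_filter, Finset.mem_Icc]; omega
      rw [heq, Nat.card_Icc]; omega
    rw [← hfilter]
    refine prodSplitPow _ _ (fun k => k ≤ r) ?_ ?_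
    · intro k hk hkr
      rw [Finset.mem_Icc] at hk
      apply sinHalfPos
      · have h3 : φ k ≤ φ r := hφle r k hk.1 hkr (by omega)
        have := (hband r h1 h2).1
        linarith
      · have h3 : φ 1 ≤ φ k := hφle k 1 le_rfl hk.1 (by omega)
        have := (hrange r h1 h2).2
        linarith
    · intro k hk hkr
      rw [Finset.mem_Icc] at hk
      apply sinHalfNeg
      · have h3 : φ (r + 1) ≤ φ k := hφle k (r + 1) (by omega) (by omega) (by omega)
        have := (hband r h1 h2).2
        linarith
      · have h3 : φ k ≤ φ (m + 1) := hφle (m + 1) k hk.1 (by omega) le_rfl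
        have := (hrange r h1 h2).1
        rw [hφp] at h3
        linarith
  -- the second product
  -- the second product
  have hP2 : ∀ r, 1 ≤ r → r ≤ m →
      0 < (-1 : ℝ) ^ (m - r) *
        ∏ s ∈ (Finset.Icc 1 m).erase r,
          Real.sin ((θ ((e r : ℕ) + 1) - θ ((e s : ℕ) + 1)) / 2) := by
    intro r h1 h2
    have hfilter : (((Finset.Icc 1 m).erase r).filter (fun s => ¬ s < r)).card = m - r := by
      have heq : ((Finset.Icc 1 m).erase r).filter (fun s => ¬ s < r)
          = Finset.Icc (r + 1) m := by
        ext x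
        simp only [Finset.mem_filter, Finset.mem_erase, Finset.mem_Icc]
        omega
      rw [heq, Nat.card_Icc]; omega
    rw [← hfilter]
    refine prodSplitPow _ _ (fun s => s < r) ?_ ?_
    · intro s hs hsr
      rw [Finset.mem_erase, Finset.mem_Icc] at hs
      apply sinHalfPos
      · have := hord s r hs.2.1 hsr h2; linarith
      · have ha := (hrange r h1 h2).2
        have hb := (hrange s hs.2.1 hs.2.2).1
        linarith
    · intro s hs hsr
      rw [Finset.mem_erase, Finset.mem_Icc] at hs
      have hrs : r < s := by omega
      apply sinHalfNeg
      · have := hord r s h1 hrs hs.2.2; linarith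
      · have ha := (hrange r h1 h2).1
        have hb := (hrange s hs.2.1 hs.2.2).2
        linarith
  -- injectivity of e on [1, m]
  have hinj : Set.InjOn e (Finset.Icc 1 m) := by
    apply Finset.card_image_iff.mp
    rw [← hJe, hJcard, Nat.card_Icc]
    omega
  -- e r ∈ J
  have hmemJ : ∀ r, 1 ≤ r → r ≤ m → e r ∈ J := by
    intro r h1 h2
    rw [hJe]
    exact Finset.mem_image.mpr ⟨r, Finset.mem_Icc.mpr ⟨h1, h2⟩, rfl⟩
  -- erase identification
  have herase : ∀ r, 1 ≤ r → r ≤ m →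
      J.erase (e r) = ((Finset.Icc 1 m).erase r).image e := by
    intro r h1 h2
    ext j
    simp only [Finset.mem_erase, Finset.mem_image, hJe, Finset.mem_Icc]
    constructor
    · rintro ⟨hne, s, hs, rfl⟩
      refine ⟨s, ⟨?_, hs⟩, rfl⟩
      rintro rfl
      exact hne rfl
    · rintro ⟨s, ⟨hsr, hs⟩, rfl⟩
      refine ⟨?_, s, hs, rfl⟩
      intro hes
      exact hsr (hinj (by simp [Finset.mem_Icc]; omega) (by simp [Finset.mem_Icc]; omega) hes)
  -- positivity of circuitC at e r
  have hpos : ∀ r, 1 ≤ r → r ≤ m → 0 < circuitC n m θ φ J (e r) := by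
    intro r h1 h2
    have hmem := hmemJ r h1 h2
    rw [circuitC, if_pos hmem]
    have hprod : ∏ j' ∈ J.erase (e r),
        Real.sin ((θ ((e r : ℕ) + 1) - θ ((j' : ℕ) + 1)) / 2)
        = ∏ s ∈ (Finset.Icc 1 m).erase r,
            Real.sin ((θ ((e r : ℕ) + 1) - θ ((e s : ℕ) + 1)) / 2) := by
      rw [herase r h1 h2]
      apply Finset.prod_image
      intro x hx y hy hxy
      exact hinj (Finset.mem_of_mem_erase hx) (Finset.mem_of_mem_erase hy) hxy
    rw [hprod]
    apply one_div_pos.mpr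
    have hp1 := hP1 r h1 h2
    have hp2 := hP2 r h1 h2
    set P1 := ∏ k ∈ Finset.Icc 1 m, Real.sin ((θ ((e r : ℕ) + 1) - φ k) / 2)
    set P2 := ∏ s ∈ (Finset.Icc 1 m).erase r,
        Real.sin ((θ ((e r : ℕ) + 1) - θ ((e s : ℕ) + 1)) / 2)
    have hc : ((-1 : ℝ) ^ (m - r)) * ((-1 : ℝ) ^ (m - r)) = 1 := by
      rw [← pow_add]
      exact Even.neg_one_pow ⟨m - r, rfl⟩
    have key : ((-1 : ℝ) ^ (m - r) * P1) * ((-1 : ℝ) ^ (m - r) * P2) = P1 * P2 := by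
      calc ((-1 : ℝ) ^ (m - r) * P1) * ((-1 : ℝ) ^ (m - r) * P2)
          = (((-1 : ℝ) ^ (m - r)) * ((-1 : ℝ) ^ (m - r))) * (P1 * P2) := by ring
        _ = P1 * P2 := by rw [hc, one_mul]
    have := mul_pos hp1 hp2
    linarith [key ▸ this]
  refine ⟨?_, ?_, ?_⟩
  · intro r h1 h2
    exact ⟨signPow (hP1 r h1 h2), signPow (hP2 r h1 h2), hpos r h1 h2⟩
  · intro j
    by_cases hj : j ∈ J
    · rw [hJe] at hj
      obtain ⟨r, hr, rfl⟩ := Finset.mem_image.mp hj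
      rw [Finset.mem_Icc] at hr
      exact (hpos r hr.1 hr.2).le
    · rw [circuitC, if_neg hj]
  · intro j hj
    rw [hJe] at hj
    obtain ⟨r, hr, rfl⟩ := Finset.mem_image.mp hj
    rw [Finset.mem_Icc] at hr
    exact hpos r hr.1 hr.2
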